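/- Let G be a finite nonempty set, q a probability vector on G and λ ≥ 0. Let (Ω, 𝓕, ℙ) be a probability space carrying an ℕ-valued random variable N with Poisson distribution of parameter λ and an i.i.d. sequence (Y_n)_{n≥1} of G-valued random variables with distribution q, with N and the whole sequence (Y_n) mutually independent. For g ∈ G set C_g = #{1 ≤ n ≤ N : Y_n = g}. Then the family of random variables (C_g)_{g∈G} is mutually independent and each C_g has Poisson distribution with parameter q_g λ. -/

import Mathlib

open MeasureTheory ProbabilityTheory

section Aux

open scoped Nat ENNReal


private lemma count_transfer {G : Type*} [DecidableEq G] (n : ℕ) (w : ℕ → G) (g : G) :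
    ((Finset.range n).filter (fun i => w i = g)).card
      = (Finset.univ.filter (fun i : Fin n => w i = g)).card := by
  rw [Finset.card_filter, Finset.card_filter,
    ← Fin.sum_univ_eq_sum_range (fun i => if w i = g then 1 else 0)]

private lemma count_meas {G Ω : Type*} [DecidableEq G] [MeasurableSpace G]
    [MeasurableSingletonClass G] [MeasurableSpace Ω]
    (Y : ℕ → Ω → G) (hYmeas : ∀ n, Measurable (Y n)) (m : ℕ) (g : G) :
    Measurable (fun ω => ((Finset.range m).filter (fun i => Y i ω = g)).card) := by
  simp only [Finset.card_filter]
  exact Finset.measurable_sum _ (fun i _ =>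
    Measurable.ite ((hYmeas i) (measurableSet_singleton g)) measurable_const measurable_const)

private def Ev {G Ω : Type*} [DecidableEq G] (Y : ℕ → Ω → G) (m : ℕ) (d : G → ℕ) : Set Ω :=
  ⋂ g, {ω | ((Finset.range m).filter (fun i => Y i ω = g)).card = d g}

private lemma mem_Ev {G Ω : Type*} [DecidableEq G] {Y : ℕ → Ω → G} {m : ℕ} {d : G → ℕ}
    {ω : Ω} : ω ∈ Ev Y m d ↔ ∀ g, ((Finset.range m).filter (fun i => Y i ω = g)).card = d g := by
  simp [Ev]

private lemma Ev_eq_preimage {G Ω : Type*} [Fintype G] [DecidableEq G] (Y : ℕ → Ω → G)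
    (n : ℕ) (d : G → ℕ) :
    Ev Y n d = (fun ω (i : Fin n) => Y i ω) ⁻¹'
      {v : Fin n → G | ∀ g, (Finset.univ.filter (fun i => v i = g)).card = d g} := by
  ext ω
  rw [mem_Ev]
  simp only [Set.mem_preimage, Set.mem_setOf_eq]
  constructor
  · intro h g; rw [← count_transfer n (fun i => Y i ω) g]; exact h g
  · intro h g; rw [count_transfer n (fun i => Y i ω) g]; exact h g

private lemma Ev_measurable {G Ω : Type*} [Fintype G] [DecidableEq G] [MeasurableSpace G]
    [MeasurableSingletonClass G] [MeasurableSpace Ω]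
    (Y : ℕ → Ω → G) (hYmeas : ∀ n, Measurable (Y n)) (m : ℕ) (d : G → ℕ) :
    MeasurableSet (Ev Y m d) := by
  refine MeasurableSet.iInter (fun g => ?_)
  exact (count_meas Y hYmeas m g) (measurableSet_singleton (d g))

private lemma Elaw {G Ω : Type*} [Fintype G] [DecidableEq G] [mG : MeasurableSpace G]
    [MeasurableSingletonClass G] [MeasurableSpace Ω]
    (μ : Measure Ω) [IsProbabilityMeasure μ]
    (q : G → ℝ) (hq0 : ∀ g, 0 ≤ q g)
    (Y : ℕ → Ω → G) (hYmeas : ∀ n, Measurable (Y n))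
    (hYindep : iIndepFun (m := fun _ => mG) Y μ)
    (hYlaw : ∀ n g, μ {ω | Y n ω = g} = ENNReal.ofReal (q g)) :
    ∀ (n : ℕ) (c : G → ℕ), (∑ g, c g) = n →
      μ (Ev Y n c)
        = ENNReal.ofReal ((n ! : ℝ) * (∏ g, q g ^ c g) / ∏ g, ((c g)! : ℝ)) := by
  intro n
  induction n with
  | zero =>
    intro c hc
    have hc0 : ∀ g, c g = 0 := by
      intro g
      exact (Finset.sum_eq_zero_iff.1 hc) g (Finset.mem_univ g)
    have hE : Ev Y 0 c = Set.univ := by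
      ext ω; rw [mem_Ev]; simp [hc0]
    rw [hE]
    simp [hc0, measure_univ]
  | succ n ih =>
    intro c hc
    -- counting recurrence
    have hrec : ∀ (ω : Ω) (h : G),
        ((Finset.range (n+1)).filter (fun i => Y i ω = h)).card
          = ((Finset.range n).filter (fun i => Y i ω = h)).card
            + (if Y n ω = h then 1 else 0) := by
      intro ω h
      rw [Finset.range_add_one, Finset.filter_insert]
      split_ifs with hY
      · rw [Finset.card_insert_of_notMem (fun hmem => by
          have := Finset.mem_range.1 (Finset.mem_filter.1 hmem).1
          omega)]
      · simp
    -- independence of Y n from first n values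
    have hindep : ∀ (B : Set (Fin n → G)) (g : G),
        μ ((Y n) ⁻¹' {g} ∩ (fun ω (i : Fin n) => Y i ω) ⁻¹' B)
          = μ ((Y n) ⁻¹' {g}) * μ ((fun ω (i : Fin n) => Y i ω) ⁻¹' B) := by
      intro B g
      have hdisj : Disjoint ({n} : Finset ℕ) (Finset.range n) := by
        simp [Finset.disjoint_singleton_left]
      have h2 : Measurable (fun v : ({n} : Finset ℕ) → G =>
          v ⟨n, Finset.mem_singleton_self n⟩) := measurable_pi_apply _
      have h3 : Measurable (fun v : ↥(Finset.range n) → G =>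
          fun i : Fin n => v ⟨(i : ℕ), Finset.mem_range.2 i.isLt⟩) :=
        measurable_pi_lambda _ (fun i => measurable_pi_apply _)
      have h1 : IndepFun (Y n) (fun ω (i : Fin n) => Y i ω) μ :=
        (hYindep.indepFun_finset {n} (Finset.range n) hdisj hYmeas).comp h2 h3
      exact h1.measure_inter_preimage_eq_mul _ _ (measurableSet_singleton g)
        (B.toFinite.measurableSet)
    -- update family
    have hsplit : ∀ g : G, (Y n) ⁻¹' {g} ∩ Ev Y (n+1) c
        = if c g = 0 then ∅
          else (Y n) ⁻¹' {g} ∩ Ev Y n (Function.update c g (c g - 1)) := by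
      intro g
      split_ifs with h0
      · ext ω
        simp only [Set.mem_inter_iff, Set.mem_preimage, Set.mem_singleton_iff, mem_Ev,
          Set.mem_empty_iff_false, iff_false, not_and]
        intro hYn hall
        have hg := hall g
        rw [hrec ω g, if_pos hYn] at hg
        omega
      · ext ω
        simp only [Set.mem_inter_iff, Set.mem_preimage, Set.mem_singleton_iff, mem_Ev]
        constructor
        · rintro ⟨hYn, hall⟩
          refine ⟨hYn, fun h => ?_⟩
          have hh := hall h
          rw [hrec ω h] at hh
          rcases eq_or_ne h g with rfl | hne
          · rw [Function.update_self]
            rw [if_pos hYn] at hh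
            omega
          · rw [Function.update_of_ne hne]
            rw [if_neg (fun he => hne (he.symm.trans hYn))] at hh
            omega
        · rintro ⟨hYn, hall⟩
          refine ⟨hYn, fun h => ?_⟩
          have hh := hall h
          rw [hrec ω h]
          rcases eq_or_ne h g with rfl | hne
          · rw [Function.update_self] at hh
            rw [if_pos hYn]
            omega
          · rw [Function.update_of_ne hne] at hh
            rw [if_neg (fun he => hne (he.symm.trans hYn))]
            omega
    -- partition over the value of Y n
    have hpart : Ev Y (n+1) c = ⋃ g : G, ((Y n) ⁻¹' {g} ∩ Ev Y (n+1) c) := by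
      ext ω
      simp only [Set.mem_iUnion, Set.mem_inter_iff, Set.mem_preimage, Set.mem_singleton_iff]
      constructor
      · intro h; exact ⟨Y n ω, rfl, h⟩
      · rintro ⟨g, _, h⟩; exact h
    have hmeas2 : ∀ g : G, MeasurableSet ((Y n) ⁻¹' {g} ∩ Ev Y (n+1) c) :=
      fun g => ((hYmeas n) (measurableSet_singleton g)).inter
        (Ev_measurable Y hYmeas (n+1) c)
    have hdisj2 : Pairwise (Function.onFun Disjoint
        (fun g : G => (Y n) ⁻¹' {g} ∩ Ev Y (n+1) c)) := by
      intro g g' hgg'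
      refine Set.disjoint_left.2 fun ω h1 h2 => hgg' ?_
      rw [← h1.1, ← h2.1]
    rw [hpart, measure_iUnion hdisj2 hmeas2, tsum_fintype]
    -- value of each term
    have hval : ∀ g : G, μ ((Y n) ⁻¹' {g} ∩ Ev Y (n+1) c)
        = ENNReal.ofReal (if c g = 0 then (0:ℝ) else
            q g * ((n ! : ℝ) * (∏ h, q h ^ (Function.update c g (c g - 1)) h)
              / ∏ h, (((Function.update c g (c g - 1)) h)! : ℝ))) := by
      intro g
      rw [hsplit g]
      split_ifs with h0
      · simp
      · have hsum' : (∑ h, Function.update c g (c g - 1) h) = n := by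
          rw [Finset.sum_update_of_mem (Finset.mem_univ g)]
          have := Finset.sum_eq_add_sum_sdiff_singleton_of_mem (f := c) (Finset.mem_univ g)
          omega
        rw [Ev_eq_preimage Y n (Function.update c g (c g - 1)), hindep _ g,
          ← Ev_eq_preimage Y n (Function.update c g (c g - 1)),
          ih (Function.update c g (c g - 1)) hsum']
        have : (Y n) ⁻¹' {g} = {ω | Y n ω = g} := rfl
        rw [this, hYlaw n g, ← ENNReal.ofReal_mul (hq0 g)]
    rw [Finset.sum_congr rfl (fun g _ => hval g)]
    -- turn into a real sum
    have hnn : ∀ g ∈ Finset.univ (α := G), (0:ℝ) ≤ (if c g = 0 then (0:ℝ) else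
        q g * ((n ! : ℝ) * (∏ h, q h ^ (Function.update c g (c g - 1)) h)
          / ∏ h, (((Function.update c g (c g - 1)) h)! : ℝ))) := by
      intro g _
      split_ifs with h0
      · exact le_refl 0
      · exact mul_nonneg (hq0 g) (div_nonneg
          (mul_nonneg (Nat.cast_nonneg _)
            (Finset.prod_nonneg (fun h _ => pow_nonneg (hq0 h) _)))
          (Finset.prod_nonneg (fun h _ => Nat.cast_nonneg _)))
    rw [← ENNReal.ofReal_sum_of_nonneg hnn]
    congr 1
    -- per-term real identity
    have hterm : ∀ g : G, (if c g = 0 then (0:ℝ) else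
        q g * ((n ! : ℝ) * (∏ h, q h ^ (Function.update c g (c g - 1)) h)
          / ∏ h, (((Function.update c g (c g - 1)) h)! : ℝ)))
        = (c g : ℝ) * ((n ! : ℝ) * (∏ h, q h ^ c h) / ∏ h, ((c h)! : ℝ)) := by
      intro g
      split_ifs with h0
      · simp [h0]
      · have hq' : q g * ∏ h, q h ^ (Function.update c g (c g - 1)) h = ∏ h, q h ^ c h := by
          rw [← Finset.mul_prod_erase Finset.univ (fun h => q h ^ c h) (Finset.mem_univ g),
            ← Finset.mul_prod_erase Finset.univ
              (fun h => q h ^ (Function.update c g (c g - 1)) h) (Finset.mem_univ g),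
            ← mul_assoc]
          congr 1
          · rw [Function.update_self, ← pow_succ']
            congr 1
            omega
          · exact Finset.prod_congr rfl (fun h hh => by
              rw [Function.update_of_ne (Finset.ne_of_mem_erase hh)])
        have hf' : (∏ h, ((c h)! : ℝ))
            = (c g : ℝ) * ∏ h, (((Function.update c g (c g - 1)) h)! : ℝ) := by
          rw [← Finset.mul_prod_erase Finset.univ (fun h => ((c h)! : ℝ)) (Finset.mem_univ g),
            ← Finset.mul_prod_erase Finset.univ
              (fun h => (((Function.update c g (c g - 1)) h)! : ℝ)) (Finset.mem_univ g)]
          have herase : ∏ h ∈ Finset.univ.erase g,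
              (((Function.update c g (c g - 1)) h)! : ℝ)
              = ∏ h ∈ Finset.univ.erase g, ((c h)! : ℝ) :=
            Finset.prod_congr rfl (fun h hh => by
              rw [Function.update_of_ne (Finset.ne_of_mem_erase hh)])
          rw [herase, ← mul_assoc]
          congr 1
          rw [Function.update_self]
          rw [← Nat.cast_mul, ← Nat.mul_factorial_pred h0]
        have hQ' : (∏ h, (((Function.update c g (c g - 1)) h)! : ℝ)) ≠ 0 :=
          Finset.prod_ne_zero_iff.2 (fun h _ => Nat.cast_ne_zero.2 (Nat.factorial_ne_zero _))
        have hcg0 : (c g : ℝ) ≠ 0 := Nat.cast_ne_zero.2 h0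
        rw [← hq', hf']
        field_simp
    rw [Finset.sum_congr rfl (fun g _ => hterm g), ← Finset.sum_mul]
    have hcsum : (∑ g, (c g : ℝ)) = ((n:ℝ) + 1) := by
      rw [← Nat.cast_sum, hc]
      push_cast
      ring
    rw [hcsum, Nat.factorial_succ]
    push_cast
    ring


private lemma key_lemma {G Ω : Type*} [Fintype G] [DecidableEq G] [MeasurableSpace Ω]
    (μ : Measure Ω) (X : G → Ω → ℕ) (hX : ∀ g, Measurable (X g))
    (p : G → ℕ → ENNReal)
    (hjoint : ∀ c : G → ℕ, μ (⋂ g, X g ⁻¹' {c g}) = ∏ g, p g (c g))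
    (hp : ∀ g, ∑' m, p g m = 1) :
    ∀ (s : Finset G) (c : G → ℕ),
      μ (⋂ g ∈ s, X g ⁻¹' {c g}) = ∏ g ∈ s, p g (c g) := by
  have step : ∀ (s : Finset G) (a : G), a ∈ s →
      (∀ c : G → ℕ, μ (⋂ g ∈ s, X g ⁻¹' {c g}) = ∏ g ∈ s, p g (c g)) →
      ∀ c : G → ℕ, μ (⋂ g ∈ s.erase a, X g ⁻¹' {c g}) = ∏ g ∈ s.erase a, p g (c g) := by
    intro s a ha H c
    have hun : (⋂ g ∈ s.erase a, X g ⁻¹' {c g})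
        = ⋃ m : ℕ, ⋂ g ∈ s, X g ⁻¹' {Function.update c a m g} := by
      ext ω
      simp only [Set.mem_iUnion, Set.mem_iInter, Set.mem_preimage, Set.mem_singleton_iff]
      constructor
      · intro h
        refine ⟨X a ω, fun g hg => ?_⟩
        rcases eq_or_ne g a with rfl | hne
        · simp
        · rw [Function.update_of_ne hne]
          exact h g (Finset.mem_erase.2 ⟨hne, hg⟩)
      · rintro ⟨m, hm⟩ g hg
        have := hm g (Finset.mem_of_mem_erase hg)
        rwa [Function.update_of_ne (Finset.ne_of_mem_erase hg)] at this
    have hmeasinter : ∀ m : ℕ, MeasurableSet (⋂ g ∈ s, X g ⁻¹' {Function.update c a m g}) :=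
      fun m => MeasurableSet.biInter s.countable_toSet
        (fun g _ => (hX g) (measurableSet_singleton _))
    have hdisj : Pairwise (Function.onFun Disjoint
        (fun m : ℕ => ⋂ g ∈ s, X g ⁻¹' {Function.update c a m g})) := by
      intro m m' hmm'
      refine Set.disjoint_left.2 fun ω h1 h2 => hmm' ?_
      simp only [Set.mem_iInter, Set.mem_preimage, Set.mem_singleton_iff] at h1 h2
      have e1 := h1 a ha
      have e2 := h2 a ha
      rw [Function.update_self] at e1 e2
      rw [← e1, ← e2]
    rw [hun, measure_iUnion hdisj hmeasinter]
    have hterm : ∀ m : ℕ, μ (⋂ g ∈ s, X g ⁻¹' {Function.update c a m g})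
        = p a m * ∏ g ∈ s.erase a, p g (c g) := by
      intro m
      rw [H (Function.update c a m), ← Finset.mul_prod_erase s _ ha]
      congr 1
      · simp
      · exact Finset.prod_congr rfl (fun g hg => by
          rw [Function.update_of_ne (Finset.ne_of_mem_erase hg)])
    rw [tsum_congr hterm, ENNReal.tsum_mul_right, hp a, one_mul]
  have main : ∀ (u : Finset G) (c : G → ℕ),
      μ (⋂ g ∈ uᶜ, X g ⁻¹' {c g}) = ∏ g ∈ uᶜ, p g (c g) := by
    intro u
    induction u using Finset.induction_on with
    | empty =>
      intro c
      have h1 : (⋂ g ∈ ((∅ : Finset G)ᶜ), X g ⁻¹' {c g}) = ⋂ g, X g ⁻¹' {c g} := by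
        simp
      rw [h1, hjoint c]
      simp
    | insert _ _ ha ih =>
      rename_i a u
      intro c
      rw [Finset.compl_insert]
      exact step _ a (Finset.mem_compl.2 ha) ih c
  intro s c
  have := main sᶜ c
  rwa [compl_compl] at this


/-- Let `q` be a probability vector on a finite nonempty set `G`, `λ ≥ 0`,
`N` a Poisson random variable of parameter `λ`, and `(Y_n)_{n ≥ 1}` an i.i.d. sequence with
distribution `q`, independent of `N` (here `Y n` stands for `Y_{n+1}`).  Then the counts
`C_g = #{1 ≤ n ≤ N : Y_n = g}` are mutually independent, and `C_g` is Poisson with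
parameter `q_g λ`. -/
theorem stmt9 {G : Type*} [Fintype G] [Nonempty G] [DecidableEq G]
    [mG : MeasurableSpace G] [MeasurableSingletonClass G]
    (q : G → ℝ) (hq0 : ∀ g, 0 ≤ q g) (hq1 : ∑ g, q g = 1)
    (l : ℝ) (hl : 0 ≤ l)
    {Ω : Type*} [MeasurableSpace Ω] (μ : Measure Ω) [IsProbabilityMeasure μ]
    (N : Ω → ℕ) (hNmeas : Measurable N)
    (hNlaw : ∀ m : ℕ, μ {ω | N ω = m}
      = ENNReal.ofReal (Real.exp (-l) * l ^ m / m.factorial))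
    (Y : ℕ → Ω → G) (hYmeas : ∀ n, Measurable (Y n))
    (hYindep : iIndepFun (m := fun _ => mG) Y μ)
    (hYlaw : ∀ n g, μ {ω | Y n ω = g} = ENNReal.ofReal (q g))
    (hNY : IndepFun N (fun ω (n : ℕ) => Y n ω) μ) :
    iIndepFun (m := fun _ => (inferInstance : MeasurableSpace ℕ))
      (fun (g : G) (ω : Ω) =>
        ((Finset.range (N ω)).filter (fun n => Y n ω = g)).card) μ ∧
    ∀ (g : G) (m : ℕ),
      μ {ω | ((Finset.range (N ω)).filter (fun n => Y n ω = g)).card = m}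
        = ENNReal.ofReal (Real.exp (-(q g * l)) * (q g * l) ^ m / m.factorial) := by
  classical
  set C : G → Ω → ℕ :=
    fun g ω => ((Finset.range (N ω)).filter (fun n => Y n ω = g)).card with hC
  -- measurability of the counts
  have hCmeas : ∀ g, Measurable (C g) := by
    intro g
    apply measurable_to_countable'
    intro m
    have hset : (C g) ⁻¹' {m} = ⋃ n, (N ⁻¹' {n}
        ∩ {ω | ((Finset.range n).filter (fun i => Y i ω = g)).card = m}) := by
      ext ω
      simp only [Set.mem_preimage, Set.mem_singleton_iff, Set.mem_iUnion, Set.mem_inter_iff,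
        Set.mem_setOf_eq, hC]
      constructor
      · intro h; exact ⟨N ω, rfl, h⟩
      · rintro ⟨n, rfl, h⟩; exact h
    rw [hset]
    exact MeasurableSet.iUnion fun n => (hNmeas (measurableSet_singleton n)).inter
      ((count_meas Y hYmeas n g) (measurableSet_singleton m))
  -- the target pmf
  set p : G → ℕ → ℝ≥0∞ := fun g m =>
    ENNReal.ofReal (Real.exp (-(q g * l)) * (q g * l) ^ m / m.factorial) with hp_def
  have hp : ∀ g, ∑' m, p g m = 1 := by
    intro g
    have hr : ∀ m : ℕ, p g m
        = ENNReal.ofReal (poissonPMFReal (Real.toNNReal (q g * l)) m) := by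
      intro m; rw [hp_def]; unfold poissonPMFReal; rw [Real.coe_toNNReal _ (mul_nonneg (hq0 g) hl)]
    rw [tsum_congr hr, ← ENNReal.ofReal_tsum_of_nonneg
      (fun m => poissonPMFReal_nonneg) (poissonPMFRealSum _).summable]
    unfold poissonPMFReal
    rw [(poissonPMFRealSum _).tsum_eq]
    exact ENNReal.ofReal_one
  -- joint law of the counts
  have hjoint : ∀ c : G → ℕ, μ (⋂ g, C g ⁻¹' {c g}) = ∏ g, p g (c g) := by
    intro c
    set n := ∑ g, c g with hn
    set Bset : Set (ℕ → G) :=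
      {y | ∀ g, ((Finset.range n).filter (fun i => y i = g)).card = c g} with hBs
    have hsum_counts : ∀ ω : Ω, (∑ g, C g ω) = N ω := by
      intro ω
      have h1 := Finset.card_eq_sum_card_fiberwise
        (s := Finset.range (N ω)) (t := Finset.univ) (f := fun i => Y i ω)
        (fun i _ => Finset.mem_univ _)
      rw [Finset.card_range] at h1
      exact h1.symm
    have hset : (⋂ g, C g ⁻¹' {c g})
        = N ⁻¹' {n} ∩ ((fun ω (k : ℕ) => Y k ω) ⁻¹' Bset) := by
      ext ω
      simp only [Set.mem_iInter, Set.mem_preimage, Set.mem_singleton_iff, Set.mem_inter_iff,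
        hBs, Set.mem_setOf_eq]
      constructor
      · intro h
        have hN : N ω = n := by
          rw [← hsum_counts ω, Finset.sum_congr rfl (fun g _ => h g)]
        refine ⟨hN, fun g => ?_⟩
        rw [← hN]
        exact h g
      · rintro ⟨hN, hB⟩ g
        show ((Finset.range (N ω)).filter (fun i => Y i ω = g)).card = c g
        rw [hN]
        exact hB g
    have hBmeas : MeasurableSet Bset := by
      have hBpre : Bset = (fun y (i : Fin n) => y (i : ℕ)) ⁻¹'
          {v : Fin n → G | ∀ g, (Finset.univ.filter (fun i => v i = g)).card = c g} := by
        ext y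
        simp only [hBs, Set.mem_setOf_eq, Set.mem_preimage]
        constructor
        · intro h g; rw [← count_transfer n y g]; exact h g
        · intro h g; rw [count_transfer n y g]; exact h g
      rw [hBpre]
      exact (measurable_pi_lambda _ fun i => measurable_pi_apply _)
        (Set.toFinite _).measurableSet
    have hVE : ((fun ω (k : ℕ) => Y k ω) ⁻¹' Bset) = Ev Y n c := by
      ext ω
      simp only [Set.mem_preimage, hBs, Set.mem_setOf_eq, mem_Ev]
    rw [hset, hNY.measure_inter_preimage_eq_mul _ _ (measurableSet_singleton n) hBmeas,
      hVE, Elaw μ q hq0 Y hYmeas hYindep hYlaw n c hn.symm]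
    have hNn : N ⁻¹' {n} = {ω | N ω = n} := rfl
    rw [hNn, hNlaw n]
    have hA : (0:ℝ) ≤ Real.exp (-l) * l ^ n / (n ! : ℝ) :=
      div_nonneg (mul_nonneg (Real.exp_pos _).le (pow_nonneg hl n)) (Nat.cast_nonneg _)
    rw [← ENNReal.ofReal_mul hA]
    have hB : ∀ g ∈ Finset.univ (α := G),
        (0:ℝ) ≤ Real.exp (-(q g * l)) * (q g * l) ^ c g / ((c g)! : ℝ) :=
      fun g _ => div_nonneg (mul_nonneg (Real.exp_pos _).le
        (pow_nonneg (mul_nonneg (hq0 g) hl) _)) (Nat.cast_nonneg _)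
    have hprod : (∏ g, p g (c g)) = ENNReal.ofReal
        (∏ g, (Real.exp (-(q g * l)) * (q g * l) ^ c g / ((c g)! : ℝ))) := by
      rw [ENNReal.ofReal_prod_of_nonneg hB]
    rw [hprod]
    congr 1
    -- the real identity
    have hexp : (∏ g, Real.exp (-(q g * l))) = Real.exp (-l) := by
      rw [← Real.exp_sum]
      congr 1
      rw [Finset.sum_neg_distrib, ← Finset.sum_mul, hq1, one_mul]
    have hpow : (∏ g, (q g * l) ^ c g) = (∏ g, q g ^ c g) * l ^ n := by
      simp_rw [mul_pow]
      rw [Finset.prod_mul_distrib, Finset.prod_pow_eq_pow_sum]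
    rw [Finset.prod_div_distrib, Finset.prod_mul_distrib, hexp, hpow]
    have hfact : (0:ℝ) < ∏ g, ((c g)! : ℝ) :=
      Finset.prod_pos fun g _ => by exact_mod_cast (c g).factorial_pos
    have hnfac : ((n ! : ℕ) : ℝ) ≠ 0 := by
      exact_mod_cast n.factorial_ne_zero
    field_simp
  -- marginals
  have hkey := key_lemma μ C hCmeas p hjoint hp
  have hmarg : ∀ g m, μ (C g ⁻¹' {m}) = p g m := by
    intro g m
    have h1 := hkey {g} (fun _ => m)
    simpa using h1
  -- independence
  have hindep : iIndepFun (m := fun _ => (inferInstance : MeasurableSpace ℕ)) C μ := by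
    rw [iIndepFun_iff_iIndep]
    set π : G → Set (Set Ω) := fun g => {S | ∃ m : ℕ, S = C g ⁻¹' {m}} with hπ
    refine iIndepSets.iIndep (fun g => (hCmeas g).comap_le) π ?_ ?_ ?_
    · rintro g S ⟨m1, rfl⟩ T ⟨m2, rfl⟩ hne
      obtain ⟨ω, h1, h2⟩ := hne
      simp only [Set.mem_preimage, Set.mem_singleton_iff] at h1 h2
      have : m1 = m2 := by rw [← h1, ← h2]
      subst this
      exact ⟨m1, by simp⟩
    · intro g
      refine le_antisymm ?_ (MeasurableSpace.generateFrom_le ?_)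
      · intro S hS
        obtain ⟨T, hT, rfl⟩ := hS
        have hT' : C g ⁻¹' T = ⋃ m ∈ T, C g ⁻¹' {m} := by
          ext ω; simp
        rw [hT']
        exact MeasurableSet.biUnion T.to_countable
          (fun m _ => MeasurableSpace.measurableSet_generateFrom ⟨m, rfl⟩)
      · rintro S ⟨m, rfl⟩
        exact ⟨{m}, measurableSet_singleton m, rfl⟩
    · rw [iIndepSets_iff]
      intro S f hf
      choose! m hm using hf
      calc μ (⋂ i ∈ S, f i) = μ (⋂ i ∈ S, C i ⁻¹' {m i}) := by
            congr 1
            exact Set.iInter₂_congr hm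
        _ = ∏ i ∈ S, p i (m i) := hkey S m
        _ = ∏ i ∈ S, μ (f i) := Finset.prod_congr rfl fun i hi => by
            rw [hm i hi, hmarg i (m i)]
  refine ⟨hindep, fun g m => ?_⟩
  exact hmarg g m


end Aux
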